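/- In the Prooφ mechanism, when a single user changes its bid while all other bids are fixed, the number of allocated provers cannot increase beyond what holding the bid at or above the original threshold would give: formally, if user i lowers its bid (f < f_i), then for every ℓ* > ℓ, the re-sorted fee at position S̄_{ℓ*}+1 satisfies f'_{S̄_{ℓ*}+1} ≤ f_{S̄_{ℓ*}+1}, and hence ℓ' ≤ ℓ. -/

import Mathlib

/-- **Lowering a user bid cannot increase the number of allocated provers.**
If user `i` lowers its bid from `f i` to `fnew < f i` (all other bids
unchanged, `f'` the re-sorted fee sequence, `ℓ'` the new threshold), then for
every `ℓ* > ℓ` the re-sorted fee at position `Sbar ℓ* + 1` satisfies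
`f' (Sbar ℓ* + 1) ≤ f (Sbar ℓ* + 1)`, and hence `ℓ' ≤ ℓ`. -/
theorem proofee_lower_bid_no_more_provers
    (n N : ℕ) (f : ℕ → ℝ) (s : ℕ → ℕ) (p : ℕ → ℝ)
    (hf : ∀ a b, 1 ≤ a → a ≤ b → b ≤ n → f b ≤ f a)
    (hp : ∀ a b, 1 ≤ a → a ≤ b → b ≤ N → p a ≤ p b)
    (hs : ∀ j, 1 ≤ j → j ≤ N → 0 < s j)
    (Sbar : ℕ → ℕ) (hSbar : ∀ j, Sbar j = ∑ k ∈ Finset.Icc 1 j, s k)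
    (ℓ : ℕ) (hℓ1 : 1 ≤ ℓ) (hℓN : ℓ + 1 ≤ N) (hSn : Sbar ℓ + 1 ≤ n)
    (hℓ : p (ℓ + 1) ≤ f (Sbar ℓ + 1))
    (hℓmax : ∀ j, ℓ < j → j + 1 ≤ N → Sbar j + 1 ≤ n →
      f (Sbar j + 1) < p (j + 1))
    -- user i lowers its bid
    (i : ℕ) (hi1 : 1 ≤ i) (hin : i ≤ n)
    (fnew : ℝ) (hfnew : fnew < f i)
    -- re-sorted fee sequence after the deviation
    (f' : ℕ → ℝ)
    (hf' : ∀ a b, 1 ≤ a → a ≤ b → b ≤ n → f' b ≤ f' a)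
    (hmul : (Finset.Icc 1 n).val.map f' =
      fnew ::ₘ ((Finset.Icc 1 n).val.map f).erase (f i))
    -- the new allocation threshold
    (ℓ' : ℕ) (hℓ'1 : 1 ≤ ℓ') (hℓ'N : ℓ' + 1 ≤ N) (hS'n : Sbar ℓ' + 1 ≤ n)
    (hℓ' : p (ℓ' + 1) ≤ f' (Sbar ℓ' + 1))
    (hℓ'max : ∀ j, ℓ' < j → j + 1 ≤ N → Sbar j + 1 ≤ n →
      f' (Sbar j + 1) < p (j + 1)) :
    (∀ l, ℓ < l → l + 1 ≤ N → Sbar l + 1 ≤ n →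
      f' (Sbar l + 1) ≤ f (Sbar l + 1)) ∧
    ℓ' ≤ ℓ := by

  classical
  have key : ∀ k, 1 ≤ k → k ≤ n → f' k ≤ f k := by
    intro k hk1 hkn
    by_contra hcon
    push_neg at hcon
    set P : ℝ → Prop := fun x => f k < x with hPdef
    have hiM : f i ∈ (Finset.Icc 1 n).val.map f :=
      Multiset.mem_map.2 ⟨i, (by rw [Finset.mem_val]; exact Finset.mem_Icc.2 ⟨hi1, hin⟩), rfl⟩
    have hsplit : ((Finset.Icc 1 n).val.map f) =
        f i ::ₘ (((Finset.Icc 1 n).val.map f).erase (f i)) :=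
      (Multiset.cons_erase hiM).symm
    have hc1 : Multiset.countP P ((Finset.Icc 1 n).val.map f') ≤
        Multiset.countP P ((Finset.Icc 1 n).val.map f) := by
      rw [hmul, Multiset.countP_cons]
      conv_rhs => rw [hsplit, Multiset.countP_cons]
      by_cases hPfi : P (f i)
      · have h1 : (if P fnew then 1 else 0) ≤ 1 := by split_ifs <;> simp
        have h2 : (if P (f i) then 1 else 0) = 1 := by simp [hPfi]
        omega
      · have hnew : ¬ P fnew := by
          intro h
          exact hPfi (lt_trans h hfnew)
        have h1 : (if P fnew then 1 else 0) = 0 := by simp [hnew]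
        have h2 : Multiset.countP P (((Finset.Icc 1 n).val.map f).erase (f i)) ≤
            Multiset.countP P ((Finset.Icc 1 n).val.map f) :=
          Multiset.countP_le_of_le _ (Multiset.erase_le _ _)
        omega
    have hupper : Multiset.countP P ((Finset.Icc 1 n).val.map f) ≤ k - 1 := by
      rw [Multiset.countP_map]
      have hsub : (Finset.Icc 1 n).filter (fun j => P (f j)) ⊆ Finset.Icc 1 (k - 1) := by
        intro j hj
        rw [Finset.mem_filter, Finset.mem_Icc] at hj
        rw [Finset.mem_Icc]
        refine ⟨hj.1.1, ?_⟩
        by_contra hjk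
        push_neg at hjk
        have : k ≤ j := by omega
        exact absurd hj.2 (not_lt.2 (hf k j hk1 this hj.1.2))
      have := Finset.card_le_card hsub
      rwa [Nat.card_Icc, Nat.add_sub_cancel] at this
    have hlower : k ≤ Multiset.countP P ((Finset.Icc 1 n).val.map f') := by
      rw [Multiset.countP_map]
      have hsub : Finset.Icc 1 k ⊆ (Finset.Icc 1 n).filter (fun j => P (f' j)) := by
        intro j hj
        rw [Finset.mem_Icc] at hj
        rw [Finset.mem_filter, Finset.mem_Icc]
        exact ⟨⟨hj.1, le_trans hj.2 hkn⟩, lt_of_lt_of_le hcon (hf' j k hj.1 hj.2 hkn)⟩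
      have := Finset.card_le_card hsub
      rwa [Nat.card_Icc, Nat.add_sub_cancel] at this
    omega
  refine ⟨fun l hl hlN hSn' => key _ (by omega) hSn', ?_⟩
  by_contra hcon
  push_neg at hcon
  have h1 := hℓmax ℓ' hcon hℓ'N hS'n
  have h2 := key (Sbar ℓ' + 1) (by omega) hS'n
  linarith [hℓ']
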